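/- For every λhs type τ, the reducible set Red(τ) is a reducibility candidate: Red(τ) ∈ CR. -/

import Mathlib

/- The simplified calculus λhs, in locally nameless style (two separate
   namespaces: simple variables and audited variables). -/

namespace LHS

/-- Trail-constructor labels. -/
inductive Lab : Type
| rfl | trn | bet | betb | ti | lam | app | lett | tnil | tcons | dflt
deriving DecidableEq

/-- λhs types: atomic P, functions, audited unit □τ. -/
inductive Ty : Type
| base : ℕ → Ty
| arr : Ty → Ty → Ty
| box : Ty → Ty
deriving DecidableEq

mutual
/-- λhs terms (locally nameless: bound variables are de Bruijn indices,
    free variables are names; simple and audited variables are separate). -/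
inductive Tm : Type
| bvar : ℕ → Tm          -- bound simple variable
| fvar : ℕ → Tm          -- free simple variable a
| bavar : ℕ → Tm         -- bound audited variable
| favar : ℕ → Tm         -- free audited variable u
| lam : Ty → Tm → Tm     -- λa^τ.s (binds a simple variable)
| app : Tm → Tm → Tm
| bang : Tm → Tm         -- !s
| lett : Ty → Tm → Tm → Tm  -- let(u^τ := s, t) (binds an audited variable in t)
| ti : Br → Tm           -- trail inspection with finite branch map
/-- Finite inspection-branch maps, as association lists. -/
inductive Br : Type
| nil : Br
| cons : Lab → Tm → Br → Br
end

/-- Domain of a branch map. -/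
def Br.dom : Br → List Lab
| .nil => []
| .cons ψ _ θ => ψ :: Br.dom θ

/-- Lookup in a branch map. -/
def Br.lookup : Br → Lab → Option Tm
| .nil, _ => none
| .cons ψ t θ, ψ' => if ψ = ψ' then some t else Br.lookup θ ψ'

/-- Branch selection: θ(ψ) if ψ ∈ dom(θ), otherwise the default branch θ(d). -/
def Br.sel (θ : Br) (ψ : Lab) : Tm :=
  match θ.lookup ψ with
  | some t => t
  | none => (θ.lookup Lab.dflt).getD (Tm.bvar 0)

mutual
/-- Opening: instantiate bound simple variable k with r. Like simple substitution,
    it does not descend under bangs. -/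
def openS (k : ℕ) (r : Tm) : Tm → Tm
| .bvar i => if i = k then r else .bvar i
| .fvar a => .fvar a
| .bavar i => .bavar i
| .favar u => .favar u
| .lam τ s => .lam τ (openS (k+1) r s)
| .app s t => .app (openS k r s) (openS k r t)
| .bang s => .bang s
| .lett τ s t => .lett τ (openS k r s) (openS k r t)
| .ti θ => .ti (openSBr k r θ)
def openSBr (k : ℕ) (r : Tm) : Br → Br
| .nil => .nil
| .cons ψ t θ => .cons ψ (openS k r t) (openSBr k r θ)
end

mutual
/-- Opening: instantiate bound audited variable k with r. -/
def openA (k : ℕ) (r : Tm) : Tm → Tm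
| .bvar i => .bvar i
| .fvar a => .fvar a
| .bavar i => if i = k then r else .bavar i
| .favar u => .favar u
| .lam τ s => .lam τ (openA k r s)
| .app s t => .app (openA k r s) (openA k r t)
| .bang s => .bang (openA k r s)
| .lett τ s t => .lett τ (openA k r s) (openA (k+1) r t)
| .ti θ => .ti (openABr k r θ)
def openABr (k : ℕ) (r : Tm) : Br → Br
| .nil => .nil
| .cons ψ t θ => .cons ψ (openA k r t) (openABr k r θ)
end

mutual
/-- Closing: abstract the free audited variable u as bound index k. -/
def closeA (k : ℕ) (u : ℕ) : Tm → Tm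
| .bvar i => .bvar i
| .fvar a => .fvar a
| .bavar i => .bavar i
| .favar v => if v = u then .bavar k else .favar v
| .lam τ s => .lam τ (closeA k u s)
| .app s t => .app (closeA k u s) (closeA k u t)
| .bang s => .bang (closeA k u s)
| .lett τ s t => .lett τ (closeA k u s) (closeA (k+1) u t)
| .ti θ => .ti (closeABr k u θ)
def closeABr (k : ℕ) (u : ℕ) : Br → Br
| .nil => .nil
| .cons ψ t θ => .cons ψ (closeA k u t) (closeABr k u θ)
end

mutual
/-- Simple variable substitution s[r/a]: capture-avoiding (locally nameless);
    it does not descend under bangs. -/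
def substS (a : ℕ) (r : Tm) : Tm → Tm
| .bvar i => .bvar i
| .fvar b => if b = a then r else .fvar b
| .bavar i => .bavar i
| .favar u => .favar u
| .lam τ s => .lam τ (substS a r s)
| .app s t => .app (substS a r s) (substS a r t)
| .bang s => .bang s
| .lett τ s t => .lett τ (substS a r s) (substS a r t)
| .ti θ => .ti (substSBr a r θ)
def substSBr (a : ℕ) (r : Tm) : Br → Br
| .nil => .nil
| .cons ψ t θ => .cons ψ (substS a r t) (substSBr a r θ)
end

mutual
/-- Audited variable substitution s[r/u]: capture-avoiding (locally nameless);
    it descends under bangs. -/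
def substA (u : ℕ) (r : Tm) : Tm → Tm
| .bvar i => .bvar i
| .fvar a => .fvar a
| .bavar i => .bavar i
| .favar v => if v = u then r else .favar v
| .lam τ s => .lam τ (substA u r s)
| .app s t => .app (substA u r s) (substA u r t)
| .bang s => .bang (substA u r s)
| .lett τ s t => .lett τ (substA u r s) (substA u r t)
| .ti θ => .ti (substABr u r θ)
def substABr (u : ℕ) (r : Tm) : Br → Br
| .nil => .nil
| .cons ψ t θ => .cons ψ (substA u r t) (substABr u r θ)
end

mutual
/-- Free simple variables. -/
def fvS : Tm → List ℕ
| .bvar _ => []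
| .fvar a => [a]
| .bavar _ => []
| .favar _ => []
| .lam _ s => fvS s
| .app s t => fvS s ++ fvS t
| .bang s => fvS s
| .lett _ s t => fvS s ++ fvS t
| .ti θ => fvSBr θ
def fvSBr : Br → List ℕ
| .nil => []
| .cons _ t θ => fvS t ++ fvSBr θ
end

mutual
/-- Free audited variables. -/
def fvA : Tm → List ℕ
| .bvar _ => []
| .fvar _ => []
| .bavar _ => []
| .favar u => [u]
| .lam _ s => fvA s
| .app s t => fvA s ++ fvA t
| .bang s => fvA s
| .lett _ s t => fvA s ++ fvA t
| .ti θ => fvABr θ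
def fvABr : Br → List ℕ
| .nil => []
| .cons _ t θ => fvA t ++ fvABr θ
end

mutual
/-- λhs trails (obtained from λhc trails by replacing codes with λhs terms). -/
inductive Tr : Type
| rfl : Tm → Tr
| trn : Tr → Tr → Tr
| bet : Ty → Tm → Tm → Tr          -- β(a^τ.s, t) (s binds a simple variable)
| betb : Tm → Ty → Tm → Tr         -- β□(s, u^τ.t) (t binds an audited variable)
| ti : Tr → Br → Tr
| lam : Ty → Tr → Tr
| app : Tr → Tr → Tr
| lett : Tr → Ty → Tr → Tr
| trpl : TrBr → Tr
inductive TrBr : Type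
| nil : TrBr
| cons : Lab → Tr → TrBr → TrBr
end

mutual
/-- The fold qθ of inspection branches θ over a trail q. -/
def fold (θ : Br) : Tr → Tm
| .rfl _ => θ.sel .rfl
| .trn q q' => .app (.app (θ.sel .trn) (fold θ q)) (fold θ q')
| .bet _ _ _ => θ.sel .bet
| .betb _ _ _ => θ.sel .betb
| .ti _ _ => θ.sel .ti
| .lam _ q => .app (θ.sel .lam) (fold θ q)
| .app q q' => .app (.app (θ.sel .app) (fold θ q)) (fold θ q')
| .lett q _ q' => .app (.app (θ.sel .lett) (fold θ q)) (fold θ q')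
| .trpl ζ => foldBr θ ζ
def foldBr (θ : Br) : TrBr → Tm
| .nil => θ.sel .tnil
| .cons _ q ζ => .app (.app (θ.sel .tcons) (fold θ q)) (foldBr θ ζ)
end

mutual
/-- One-step reduction of λhs: the closure under all term contexts (including
    under bang and inside inspection branches) of β, β□, and nondeterministic
    trail inspection. -/
inductive Red : Tm → Tm → Prop
| beta (τ : Ty) (s t : Tm) : Red (.app (.lam τ s) t) (openS 0 t s)
| betaBox (τ : Ty) (s t : Tm) : Red (.lett τ (.bang s) t) (openA 0 s t)
| tinsp (q : Tr) (θ : Br) : Red (.ti θ) (fold θ q)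
| lam {s t : Tm} (τ : Ty) : Red s t → Red (.lam τ s) (.lam τ t)
| appL {s t : Tm} (r : Tm) : Red s t → Red (.app s r) (.app t r)
| appR {s t : Tm} (r : Tm) : Red s t → Red (.app r s) (.app r t)
| bang {s t : Tm} : Red s t → Red (.bang s) (.bang t)
| lettL {s t : Tm} (τ : Ty) (r : Tm) : Red s t → Red (.lett τ s r) (.lett τ t r)
| lettR {s t : Tm} (τ : Ty) (r : Tm) : Red s t → Red (.lett τ r s) (.lett τ r t)
| ti {θ θ' : Br} : RedBr θ θ' → Red (.ti θ) (.ti θ')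
inductive RedBr : Br → Br → Prop
| here {s t : Tm} (ψ : Lab) (θ : Br) : Red s t → RedBr (.cons ψ s θ) (.cons ψ t θ)
| there {θ θ' : Br} (ψ : Lab) (s : Tm) : RedBr θ θ' → RedBr (.cons ψ s θ) (.cons ψ s θ')
end

/-- Strong normalization: no infinite reduction sequence starting from s. -/
def SN (s : Tm) : Prop :=
  ¬ ∃ f : ℕ → Tm, f 0 = s ∧ ∀ n, Red (f n) (f (n+1))

def SNset : Set Tm := {s | SN s}

/-- Neutral terms: not a λ-abstraction and not a bang. -/
def Neutral : Tm → Prop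
| .lam _ _ => False
| .bang _ => False
| _ => True

/-- Girard's reducibility candidates. -/
def CR (C : Set Tm) : Prop :=
  C ⊆ SNset ∧
  (∀ s t, s ∈ C → Red s t → t ∈ C) ∧
  (∀ s, Neutral s → (∀ t, Red s t → t ∈ C) → s ∈ C)

/-- Pre-candidates: CR1 and CR2 only. -/
def PCR (C : Set Tm) : Prop :=
  C ⊆ SNset ∧ (∀ s t, s ∈ C → Red s t → t ∈ C)

/-- The substitutive sub-candidate C⟨u↦D⟩. -/
def subCand (C : Set Tm) (u : ℕ) (D : Set Tm) : Set Tm :=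
  {s | s ∈ C ∧ ∀ t ∈ D, substA u t s ∈ C}

/-- Reducible sets Red(τ). -/
def RedSet : Ty → Set Tm
| .base _ => SNset
| .arr τ σ => {s | ∀ t ∈ RedSet τ, Tm.app s t ∈ RedSet σ}
| .box τ => {s | ∀ (u : ℕ) (C : Set Tm), CR C →
    ∀ t ∈ subCand C u (RedSet τ), Tm.lett τ s (closeA 0 u t) ∈ C}

/-- Branch typing function T^σ. -/
def TB (σ : Ty) : Lab → Ty
| .lam => .arr σ σ
| .trn => .arr σ (.arr σ σ)
| .app => .arr σ (.arr σ σ)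
| .lett => .arr σ (.arr σ σ)
| .tcons => .arr σ (.arr σ σ)
| _ => σ

abbrev Ctx := List (ℕ × Ty)

mutual
/-- λhs typing judgment Δ;Γ ⊢ s : τ. -/
inductive Tp : Ctx → Ctx → Tm → Ty → Prop
| var {Δ Γ : Ctx} {a : ℕ} {τ : Ty} : (a, τ) ∈ Γ → Tp Δ Γ (.fvar a) τ
| avar {Δ Γ : Ctx} {u : ℕ} {τ : Ty} : (u, τ) ∈ Δ → Tp Δ Γ (.favar u) τ
| lam {Δ Γ : Ctx} {τ σ : Ty} {s : Tm} (L : Finset ℕ) :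
    (∀ a ∉ L, Tp Δ ((a, τ) :: Γ) (openS 0 (.fvar a) s) σ) →
    Tp Δ Γ (.lam τ s) (.arr τ σ)
| app {Δ Γ : Ctx} {τ σ : Ty} {s t : Tm} :
    Tp Δ Γ s (.arr τ σ) → Tp Δ Γ t τ → Tp Δ Γ (.app s t) σ
| bang {Δ Γ : Ctx} {τ : Ty} {s : Tm} :
    Tp Δ [] s τ → Tp Δ Γ (.bang s) (.box τ)
| lett {Δ Γ : Ctx} {τ σ : Ty} {s t : Tm} (L : Finset ℕ) :
    Tp Δ Γ s (.box τ) →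
    (∀ u ∉ L, Tp ((u, τ) :: Δ) Γ (openA 0 (.favar u) t) σ) →
    Tp Δ Γ (.lett τ s t) σ
| ti {Δ Γ : Ctx} {σ : Ty} {θ : Br} :
    Lab.dflt ∈ θ.dom → TpBr Δ θ σ → Tp Δ Γ (.ti θ) σ
/-- Typing of inspection branch maps: each branch θ(ψ) is closed and has type T^σ(ψ). -/
inductive TpBr : Ctx → Br → Ty → Prop
| nil {Δ : Ctx} {σ : Ty} : TpBr Δ .nil σ
| cons {Δ : Ctx} {σ : Ty} {ψ : Lab} {t : Tm} {θ : Br} :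
    Tp Δ [] t (TB σ ψ) → TpBr Δ θ σ → TpBr Δ (.cons ψ t θ) σ
end

mutual
/-- Simultaneous (capture-avoiding) substitution of terms for free simple
    and audited variables; the simple component does not act under bangs. -/
def msub (σS σA : ℕ → Option Tm) : Tm → Tm
| .bvar i => .bvar i
| .fvar a => (σS a).getD (.fvar a)
| .bavar i => .bavar i
| .favar u => (σA u).getD (.favar u)
| .lam τ s => .lam τ (msub σS σA s)
| .app s t => .app (msub σS σA s) (msub σS σA t)
| .bang s => .bang (msub (fun _ => none) σA s)
| .lett τ s t => .lett τ (msub σS σA s) (msub σS σA t)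
| .ti θ => .ti (msubBr σS σA θ)
def msubBr (σS σA : ℕ → Option Tm) : Br → Br
| .nil => .nil
| .cons ψ t θ => .cons ψ (msub σS σA t) (msubBr σS σA θ)
end

/-- A (Δ;Γ)-adapted interpretation: a simultaneous substitution defined exactly
    on dom(Δ) ∪ dom(Γ) sending each declared variable into the corresponding
    reducible set. -/
def Adapted (Δ Γ : Ctx) (σS σA : ℕ → Option Tm) : Prop :=
  (∀ a, (σS a).isSome ↔ ∃ τ, (a, τ) ∈ Γ) ∧
  (∀ u, (σA u).isSome ↔ ∃ τ, (u, τ) ∈ Δ) ∧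
  (∀ a τ t, (a, τ) ∈ Γ → σS a = some t → t ∈ RedSet τ) ∧
  (∀ u τ t, (u, τ) ∈ Δ → σA u = some t → t ∈ RedSet τ)

end LHS
namespace LHS

/-! ### Basic SN / Acc infrastructure -/

/-- Accessibility form of strong normalization. -/
def SNa (s : Tm) : Prop := Acc (fun a b => Red b a) s

theorem sn_of_acc {s : Tm} (h : SNa s) : SN s := by
  induction h with
  | intro x hx ih =>
    rintro ⟨f, h0, hstep⟩
    subst h0
    exact ih (f 1) (hstep 0) ⟨fun n => f (n + 1), rfl, fun n => hstep (n + 1)⟩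

theorem acc_of_sn {s : Tm} (h : SN s) : SNa s := by
  by_contra hna
  have key : ∀ x : {x : Tm // ¬ SNa x}, ∃ y : {x : Tm // ¬ SNa x}, Red x.1 y.1 := by
    rintro ⟨x, hx⟩
    by_contra hno
    push_neg at hno
    exact hx (Acc.intro x (fun y hy => by
      by_contra hy'
      exact hno ⟨y, hy'⟩ hy))
  choose g hg using key
  refine h ⟨fun n => (g^[n] ⟨s, hna⟩).1, by simp, fun n => ?_⟩
  show Red (g^[n] ⟨s, hna⟩).1 (g^[n + 1] ⟨s, hna⟩).1
  rw [Function.iterate_succ_apply' g n]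
  exact hg _

theorem sn_step {s t : Tm} (h : SN s) (hst : Red s t) : SN t :=
  sn_of_acc ((acc_of_sn h).inv hst)

theorem sn_of_reducts {s : Tm} (h : ∀ t, Red s t → SN t) : SN s := by
  rintro ⟨f, h0, hstep⟩
  subst h0
  exact h (f 1) (hstep 0) ⟨fun n => f (n + 1), rfl, fun n => hstep (n + 1)⟩

theorem sn_of_map {F : Tm → Tm} (hF : ∀ {a b : Tm}, Red a b → Red (F a) (F b))
    {s : Tm} (h : SN (F s)) : SN s := by
  rintro ⟨f, h0, hstep⟩
  exact h ⟨fun n => F (f n), by simp only [h0], fun n => hF (hstep n)⟩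

theorem sn_app_left {s X : Tm} (h : SN (.app s X)) : SN s :=
  sn_of_map (fun hr => Red.appL X hr) h

theorem sn_lett_left {τ : Ty} {s K : Tm} (h : SN (.lett τ s K)) : SN s :=
  sn_of_map (fun hr => Red.lettL τ K hr) h

theorem sn_lett_right {τ : Ty} {s K : Tm} (h : SN (.lett τ s K)) : SN K :=
  sn_of_map (fun hr => Red.lettR τ s hr) h

/-! ### Reducibility candidate basics -/

theorem cr_snset : CR SNset := by
  refine ⟨fun s hs => hs, fun s t hs hst => sn_step hs hst, fun s _ h => sn_of_reducts h⟩

theorem cr_mem_step {C : Set Tm} (hC : CR C) {s t : Tm} (hs : s ∈ C) (h : Red s t) : t ∈ C :=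
  hC.2.1 s t hs h

theorem cr_mem_rtg {C : Set Tm} (hC : CR C) {s t : Tm}
    (hs : s ∈ C) (h : Relation.ReflTransGen Red s t) : t ∈ C := by
  induction h with
  | refl => exact hs
  | tail _ hstep ih => exact hC.2.1 _ _ ih hstep

theorem cr_sn {C : Set Tm} (hC : CR C) {s : Tm} (hs : s ∈ C) : SN s := hC.1 hs

/-- Neutral normal terms belong to every reducibility candidate. -/
theorem cr_mem_of_neutral_nf {C : Set Tm} (hC : CR C) {s : Tm}
    (hneu : Neutral s) (hnf : ∀ t, ¬ Red s t) : s ∈ C :=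
  hC.2.2 s hneu (fun t ht => absurd ht (hnf t))

theorem red_fvar_none {a : ℕ} {t : Tm} (h : Red (.fvar a) t) : False := by cases h
theorem red_bvar_none {a : ℕ} {t : Tm} (h : Red (.bvar a) t) : False := by cases h
theorem red_bavar_none {a : ℕ} {t : Tm} (h : Red (.bavar a) t) : False := by cases h
theorem red_favar_none {a : ℕ} {t : Tm} (h : Red (.favar a) t) : False := by cases h

theorem fvar_mem_cr {C : Set Tm} (hC : CR C) (a : ℕ) : (.fvar a : Tm) ∈ C :=
  cr_mem_of_neutral_nf hC trivial (fun _ h => red_fvar_none h)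

theorem bavar_mem_cr {C : Set Tm} (hC : CR C) (i : ℕ) : (.bavar i : Tm) ∈ C :=
  cr_mem_of_neutral_nf hC trivial (fun _ h => red_bavar_none h)

theorem favar_mem_cr {C : Set Tm} (hC : CR C) (u : ℕ) : (.favar u : Tm) ∈ C :=
  cr_mem_of_neutral_nf hC trivial (fun _ h => red_favar_none h)

end LHS
namespace LHS

/-! ### Hereditarily neutral ("hard") terms -/

mutual
inductive Hard : Tm → Prop
| bvar (i) : Hard (.bvar i)
| fvar (a) : Hard (.fvar a)
| bavar (i) : Hard (.bavar i)
| favar (u) : Hard (.favar u)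
| app {s t} : Hard s → Hard t → Hard (.app s t)
| ti {θ} : HardBr θ → Hard (.ti θ)
inductive HardBr : Br → Prop
| nil : HardBr .nil
| cons {t θ} (ψ) : Hard t → HardBr θ → HardBr (.cons ψ t θ)
end

theorem hard_neutral {s : Tm} (h : Hard s) : Neutral s := by
  cases h <;> trivial

theorem hardBr_lookup : ∀ {θ : Br}, HardBr θ → ∀ {ψ : Lab} {t : Tm},
    θ.lookup ψ = some t → Hard t
| .nil, _, ψ, t, hl => by simp [Br.lookup] at hl
| .cons ψ' t' θ', h, ψ, t, hl => by
    cases h with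
    | cons _ ht hθ =>
      by_cases hψ : ψ' = ψ
      · simp [Br.lookup, hψ] at hl
        exact hl ▸ ht
      · simp [Br.lookup, hψ] at hl
        exact hardBr_lookup hθ hl

theorem hard_sel {θ : Br} (h : HardBr θ) (ψ : Lab) : Hard (θ.sel ψ) := by
  unfold Br.sel
  cases hl : θ.lookup ψ with
  | some t => exact hardBr_lookup h hl
  | none =>
    cases hd : θ.lookup Lab.dflt with
    | some t => simpa [hd] using hardBr_lookup h hd
    | none => simp [hd]; exact Hard.bvar 0

mutual
theorem hard_fold {θ : Br} (h : HardBr θ) : ∀ q : Tr, Hard (fold θ q)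
| .rfl _ => hard_sel h _
| .trn q q' => .app (.app (hard_sel h _) (hard_fold h q)) (hard_fold h q')
| .bet _ _ _ => hard_sel h _
| .betb _ _ _ => hard_sel h _
| .ti _ _ => hard_sel h _
| .lam _ q => .app (hard_sel h _) (hard_fold h q)
| .app q q' => .app (.app (hard_sel h _) (hard_fold h q)) (hard_fold h q')
| .lett q _ q' => .app (.app (hard_sel h _) (hard_fold h q)) (hard_fold h q')
| .trpl ζ => hard_foldBr h ζ
theorem hard_foldBr {θ : Br} (h : HardBr θ) : ∀ ζ : TrBr, Hard (foldBr θ ζ)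
| .nil => hard_sel h _
| .cons _ q ζ => .app (.app (hard_sel h _) (hard_fold h q)) (hard_foldBr h ζ)
end

/-- Hardness is preserved by reduction. -/
theorem hard_step : ∀ {s t : Tm}, Red s t → Hard s → Hard t := by
  have main : ∀ {s t : Tm} (h : Red s t), (Hard s → Hard t) := by
    intro s t h
    refine @Red.rec (fun s t _ => Hard s → Hard t) (fun θ θ' _ => HardBr θ → HardBr θ') ?_ ?_ ?_ ?_ ?_ ?_ ?_ ?_ ?_ ?_ ?_ ?_ s t h
    · intro τ s t hh; cases hh with | app h1 h2 => cases h1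
    · intro τ s t hh; cases hh
    · intro q θ hh; cases hh with | ti hb => exact hard_fold hb q
    · intro s t τ _ _ hh; cases hh
    · intro s t r _ ih hh; cases hh with | app h1 h2 => exact .app (ih h1) h2
    · intro s t r _ ih hh; cases hh with | app h1 h2 => exact .app h1 (ih h2)
    · intro s t _ _ hh; cases hh
    · intro s t τ r _ _ hh; cases hh
    · intro s t τ r _ _ hh; cases hh
    · intro θ θ' _ ih hh; cases hh with | ti hb => exact .ti (ih hb)
    · intro s t ψ θ _ ih hh; cases hh with | cons ψ2 h1 h2 => exact .cons ψ (ih h1) h2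
    · intro θ θ' ψ s _ ih hh; cases hh with | cons ψ2 h1 h2 => exact .cons ψ h1 (ih h2)
  intro s t h
  exact main h

end LHS
namespace LHS

/-! ### Strong normalization of hard terms -/

theorem sna_bvar (i : ℕ) : SNa (.bvar i) :=
  Acc.intro _ (fun _ hy => absurd hy red_bvar_none)

theorem sna_fvar (i : ℕ) : SNa (.fvar i) :=
  Acc.intro _ (fun _ hy => absurd hy red_fvar_none)

theorem sna_bavar (i : ℕ) : SNa (.bavar i) :=
  Acc.intro _ (fun _ hy => absurd hy red_bavar_none)

theorem sna_favar (i : ℕ) : SNa (.favar i) :=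
  Acc.intro _ (fun _ hy => absurd hy red_favar_none)

theorem hardBr_step : ∀ {θ θ' : Br}, RedBr θ θ' → HardBr θ → HardBr θ' := by
  intro θ0 θ0' h0
  refine @RedBr.rec (fun s t _ => Hard s → Hard t) (fun θ θ' _ => HardBr θ → HardBr θ') ?_ ?_ ?_ ?_ ?_ ?_ ?_ ?_ ?_ ?_ ?_ ?_ θ0 θ0' h0
  · intro τ s t hh; cases hh with | app h1 h2 => cases h1
  · intro τ s t hh; cases hh
  · intro q θ hh; cases hh with | ti hb => exact hard_fold hb q
  · intro s t τ _ _ hh; cases hh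
  · intro s t r _ ih hh; cases hh with | app h1 h2 => exact .app (ih h1) h2
  · intro s t r _ ih hh; cases hh with | app h1 h2 => exact .app h1 (ih h2)
  · intro s t _ _ hh; cases hh
  · intro s t τ r _ _ hh; cases hh
  · intro s t τ r _ _ hh; cases hh
  · intro θ θ' _ ih hh; cases hh with | ti hb => exact .ti (ih hb)
  · intro s t ψ θ _ ih hh; cases hh with | cons ψ2 h1 h2 => exact .cons ψ (ih h1) h2
  · intro θ θ' ψ s _ ih hh; cases hh with | cons ψ2 h1 h2 => exact .cons ψ h1 (ih h2)

theorem hard_app_inv_left {a b : Tm} (h : Hard (.app a b)) : Hard a :=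
  match h with | .app h1 _ => h1

theorem hard_no_lam {τ : Ty} {s : Tm} (h : Hard (.lam τ s)) : False := nomatch h

theorem hard_no_bang {s : Tm} (h : Hard (.bang s)) : False := nomatch h

theorem hard_no_lett {τ : Ty} {s t : Tm} (h : Hard (.lett τ s t)) : False := nomatch h

/-- Application of hard strongly normalizing terms is strongly normalizing. -/
theorem hard_app_acc : ∀ {s : Tm}, SNa s → ∀ {t : Tm}, SNa t → Hard s → SNa (.app s t) := by
  intro s hs
  induction hs with
  | intro s hs ihs =>
    intro t ht
    induction ht with
    | intro t ht iht =>
      intro hhard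
      refine Acc.intro _ (fun y hy => ?_)
      cases hy with
      | beta τ s0 t0 => exact (hard_no_lam hhard).elim
      | appL r hr => exact ihs _ hr (Acc.intro t ht) (hard_step hr hhard)
      | appR r hr => exact iht _ hr hhard

/-- All branches satisfy a predicate. -/
def BrAll (P : Tm → Prop) : Br → Prop
| .nil => True
| .cons _ t θ => P t ∧ BrAll P θ

theorem brAll_lookup {P : Tm → Prop} : ∀ {θ : Br}, BrAll P θ → ∀ {ψ : Lab} {t : Tm},
    θ.lookup ψ = some t → P t
| .nil, _, ψ, t, hl => by simp [Br.lookup] at hl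
| .cons ψ' t' θ', h, ψ, t, hl => by
    by_cases hψ : ψ' = ψ
    · simp [Br.lookup, hψ] at hl
      exact hl ▸ h.1
    · simp [Br.lookup, hψ] at hl
      exact brAll_lookup h.2 hl

theorem brAll_sel_acc {θ : Br} (h : BrAll SNa θ) (ψ : Lab) : SNa (θ.sel ψ) := by
  unfold Br.sel
  cases hl : θ.lookup ψ with
  | some t => exact brAll_lookup h hl
  | none =>
    cases hd : θ.lookup Lab.dflt with
    | some t => simpa [hd] using brAll_lookup h hd
    | none => simp [hd]; exact sna_bvar 0

theorem brAll_step : ∀ {θ θ' : Br}, RedBr θ θ' → BrAll SNa θ → BrAll SNa θ'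
| .cons ψ t θ0, _, h, hall => by
  cases h with
  | here ψ2 θ2 hr => exact ⟨(hall.1).inv hr, hall.2⟩
  | there ψ2 s2 hr => exact ⟨hall.1, brAll_step hr hall.2⟩

mutual
theorem fold_acc {θ : Br} (hh : HardBr θ) (ha : BrAll SNa θ) : ∀ q : Tr, SNa (fold θ q)
| .rfl _ => brAll_sel_acc ha _
| .trn q q' => hard_app_acc (hard_app_acc (brAll_sel_acc ha _) (fold_acc hh ha q) (hard_sel hh _)) (fold_acc hh ha q') (.app (hard_sel hh _) (hard_fold hh q))
| .bet _ _ _ => brAll_sel_acc ha _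
| .betb _ _ _ => brAll_sel_acc ha _
| .ti _ _ => brAll_sel_acc ha _
| .lam _ q => hard_app_acc (brAll_sel_acc ha _) (fold_acc hh ha q) (hard_sel hh _)
| .app q q' => hard_app_acc (hard_app_acc (brAll_sel_acc ha _) (fold_acc hh ha q) (hard_sel hh _)) (fold_acc hh ha q') (.app (hard_sel hh _) (hard_fold hh q))
| .lett q _ q' => hard_app_acc (hard_app_acc (brAll_sel_acc ha _) (fold_acc hh ha q) (hard_sel hh _)) (fold_acc hh ha q') (.app (hard_sel hh _) (hard_fold hh q))
| .trpl ζ => foldBr_acc hh ha ζ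
theorem foldBr_acc {θ : Br} (hh : HardBr θ) (ha : BrAll SNa θ) : ∀ ζ : TrBr, SNa (foldBr θ ζ)
| .nil => brAll_sel_acc ha _
| .cons _ q ζ => hard_app_acc (hard_app_acc (brAll_sel_acc ha _) (fold_acc hh ha q) (hard_sel hh _)) (foldBr_acc hh ha ζ) (.app (hard_sel hh _) (hard_fold hh q))
end

/-- Accessibility of a branch list under branch reduction. -/
def AccBr (θ : Br) : Prop := Acc (fun a b => RedBr b a) θ

theorem accBr_nil : AccBr .nil := Acc.intro _ (fun _ hy => by cases hy)

theorem accBr_cons : ∀ {t : Tm}, SNa t → ∀ {θ : Br}, AccBr θ → ∀ ψ, AccBr (.cons ψ t θ) := by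
  intro t ht
  induction ht with
  | intro t ht iht =>
    intro θ hθ
    induction hθ with
    | intro θ hθ ihθ =>
      intro ψ
      refine Acc.intro _ (fun y hy => ?_)
      cases hy with
      | here ψ2 θ2 hr => exact iht _ hr (Acc.intro θ hθ) ψ
      | there ψ2 s2 hr => exact ihθ _ hr ψ

theorem accBr_of_all : ∀ {θ : Br}, BrAll SNa θ → AccBr θ
| .nil, _ => accBr_nil
| .cons ψ t θ, h => accBr_cons h.1 (accBr_of_all h.2) ψ

/-- Trail inspection over hard strongly normalizing branches is strongly normalizing. -/
theorem ti_acc {θ : Br} (hh : HardBr θ) (ha : BrAll SNa θ) : SNa (.ti θ) := by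
  have hacc := accBr_of_all ha
  revert hh ha
  induction hacc with
  | intro θ hθ ih =>
    intro hh ha
    refine Acc.intro _ (fun y hy => ?_)
    cases hy with
    | tinsp q => exact fold_acc hh ha q
    | ti hbr => exact ih _ hbr (hardBr_step hbr hh) (brAll_step hbr ha)

/-- Hard strongly normalizing terms belong to every reducibility candidate. -/
theorem hard_mem_cr {C : Set Tm} (hC : CR C) : ∀ {s : Tm}, SNa s → Hard s → s ∈ C := by
  intro s hs
  induction hs with
  | intro s hs ih =>
    intro hhard
    exact hC.2.2 s (hard_neutral hhard) (fun t ht => ih t ht (hard_step ht hhard))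

end LHS
namespace LHS

/-! ### The sponge simulation relation -/

mutual
/-- `Sim K M`: `M` simulates `K`.  It is the congruence closure of the
"sponge" rule allowing `M` to carry trail inspections that can nondeterministically
unfold to (a simulator of) `K`. -/
inductive Sim : Tm → Tm → Prop
| bvar (i) : Sim (.bvar i) (.bvar i)
| fvar (a) : Sim (.fvar a) (.fvar a)
| bavar (i) : Sim (.bavar i) (.bavar i)
| favar (u) : Sim (.favar u) (.favar u)
| lam {s s'} (τ) : Sim s s' → Sim (.lam τ s) (.lam τ s')
| app {a a' b b'} : Sim a a' → Sim b b' → Sim (.app a b) (.app a' b')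
| bang {s s'} : Sim s s' → Sim (.bang s) (.bang s')
| lett {a a' b b'} (τ) : Sim a a' → Sim b b' → Sim (.lett τ a b) (.lett τ a' b')
| ti {θ θ'} : SimBr θ θ' → Sim (.ti θ) (.ti θ')
| sponge {K θ} (q : Tr) (hd : (θ.lookup Lab.dflt).isSome) :
    Sim K (fold θ q) → Sim K (.ti θ)
inductive SimBr : Br → Br → Prop
| nil : SimBr .nil .nil
| cons {t t' θ θ'} (ψ) : Sim t t' → SimBr θ θ' → SimBr (.cons ψ t θ) (.cons ψ t' θ')
end

mutual
theorem sim_refl : ∀ t, Sim t t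
| .bvar i => .bvar i
| .fvar a => .fvar a
| .bavar i => .bavar i
| .favar u => .favar u
| .lam τ s => .lam τ (sim_refl s)
| .app a b => .app (sim_refl a) (sim_refl b)
| .bang s => .bang (sim_refl s)
| .lett τ a b => .lett τ (sim_refl a) (sim_refl b)
| .ti θ => .ti (simBr_refl θ)
theorem simBr_refl : ∀ θ, SimBr θ θ
| .nil => .nil
| .cons ψ t θ => .cons ψ (sim_refl t) (simBr_refl θ)
end

/-! ### Commutation of `fold` with opening -/

theorem lookup_openABr (k : ℕ) (r : Tm) : ∀ (θ : Br) (ψ : Lab),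
    (openABr k r θ).lookup ψ = (θ.lookup ψ).map (openA k r)
| .nil, ψ => rfl
| .cons ψ' t θ, ψ => by
    by_cases h : ψ' = ψ <;> simp [openABr, Br.lookup, h, lookup_openABr k r θ ψ]

theorem sel_openABr (k : ℕ) (r : Tm) (θ : Br) (ψ : Lab)
    (hd : (θ.lookup Lab.dflt).isSome) :
    (openABr k r θ).sel ψ = openA k r (θ.sel ψ) := by
  unfold Br.sel
  rw [lookup_openABr, lookup_openABr]
  cases θ.lookup ψ with
  | some t => rfl
  | none =>
    cases hh : θ.lookup Lab.dflt with
    | some t => rfl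
    | none => rw [hh] at hd; simp at hd

mutual
theorem fold_openA (k : ℕ) (r : Tm) (θ : Br) (hd : (θ.lookup Lab.dflt).isSome) : ∀ q : Tr,
    fold (openABr k r θ) q = openA k r (fold θ q)
| .rfl _ => by simp [fold, sel_openABr _ _ _ _ hd]
| .trn q q' => by simp [fold, sel_openABr _ _ _ _ hd, openA, fold_openA k r θ hd q, fold_openA k r θ hd q']
| .bet _ _ _ => by simp [fold, sel_openABr _ _ _ _ hd]
| .betb _ _ _ => by simp [fold, sel_openABr _ _ _ _ hd]
| .ti _ _ => by simp [fold, sel_openABr _ _ _ _ hd]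
| .lam _ q => by simp [fold, sel_openABr _ _ _ _ hd, openA, fold_openA k r θ hd q]
| .app q q' => by simp [fold, sel_openABr _ _ _ _ hd, openA, fold_openA k r θ hd q, fold_openA k r θ hd q']
| .lett q _ q' => by simp [fold, sel_openABr _ _ _ _ hd, openA, fold_openA k r θ hd q, fold_openA k r θ hd q']
| .trpl ζ => foldBr_openA k r θ hd ζ
theorem foldBr_openA (k : ℕ) (r : Tm) (θ : Br) (hd : (θ.lookup Lab.dflt).isSome) : ∀ ζ : TrBr,
    foldBr (openABr k r θ) ζ = openA k r (foldBr θ ζ)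
| .nil => by simp [foldBr, fold, sel_openABr _ _ _ _ hd]
| .cons _ q ζ => by simp [foldBr, fold, sel_openABr _ _ _ _ hd, openA, fold_openA k r θ hd q, foldBr_openA k r θ hd ζ]
end

theorem lookup_openSBr (k : ℕ) (r : Tm) : ∀ (θ : Br) (ψ : Lab),
    (openSBr k r θ).lookup ψ = (θ.lookup ψ).map (openS k r)
| .nil, ψ => rfl
| .cons ψ' t θ, ψ => by
    by_cases h : ψ' = ψ <;> simp [openSBr, Br.lookup, h, lookup_openSBr k r θ ψ]

theorem sel_openSBr (k : ℕ) (r : Tm) (θ : Br) (ψ : Lab)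
    (hd : (θ.lookup Lab.dflt).isSome) :
    (openSBr k r θ).sel ψ = openS k r (θ.sel ψ) := by
  unfold Br.sel
  rw [lookup_openSBr, lookup_openSBr]
  cases θ.lookup ψ with
  | some t => rfl
  | none =>
    cases hh : θ.lookup Lab.dflt with
    | some t => rfl
    | none => rw [hh] at hd; simp at hd

mutual
theorem fold_openS (k : ℕ) (r : Tm) (θ : Br) (hd : (θ.lookup Lab.dflt).isSome) : ∀ q : Tr,
    fold (openSBr k r θ) q = openS k r (fold θ q)
| .rfl _ => by simp [fold, sel_openSBr _ _ _ _ hd]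
| .trn q q' => by simp [fold, sel_openSBr _ _ _ _ hd, openS, fold_openS k r θ hd q, fold_openS k r θ hd q']
| .bet _ _ _ => by simp [fold, sel_openSBr _ _ _ _ hd]
| .betb _ _ _ => by simp [fold, sel_openSBr _ _ _ _ hd]
| .ti _ _ => by simp [fold, sel_openSBr _ _ _ _ hd]
| .lam _ q => by simp [fold, sel_openSBr _ _ _ _ hd, openS, fold_openS k r θ hd q]
| .app q q' => by simp [fold, sel_openSBr _ _ _ _ hd, openS, fold_openS k r θ hd q, fold_openS k r θ hd q']
| .lett q _ q' => by simp [fold, sel_openSBr _ _ _ _ hd, openS, fold_openS k r θ hd q, fold_openS k r θ hd q']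
| .trpl ζ => foldBr_openS k r θ hd ζ
theorem foldBr_openS (k : ℕ) (r : Tm) (θ : Br) (hd : (θ.lookup Lab.dflt).isSome) : ∀ ζ : TrBr,
    foldBr (openSBr k r θ) ζ = openS k r (foldBr θ ζ)
| .nil => by simp [foldBr, fold, sel_openSBr _ _ _ _ hd]
| .cons _ q ζ => by simp [foldBr, fold, sel_openSBr _ _ _ _ hd, openS, fold_openS k r θ hd q, foldBr_openS k r θ hd ζ]
end

end LHS
namespace LHS

theorem isSome_lookup_openABr {θ : Br} {k : ℕ} {r : Tm}
    (hd : (θ.lookup Lab.dflt).isSome) : ((openABr k r θ).lookup Lab.dflt).isSome := by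
  rw [lookup_openABr]
  cases hh : θ.lookup Lab.dflt with
  | some t => simp
  | none => rw [hh] at hd; simp at hd

theorem isSome_lookup_openSBr {θ : Br} {k : ℕ} {r : Tm}
    (hd : (θ.lookup Lab.dflt).isSome) : ((openSBr k r θ).lookup Lab.dflt).isSome := by
  rw [lookup_openSBr]
  cases hh : θ.lookup Lab.dflt with
  | some t => simp
  | none => rw [hh] at hd; simp at hd

/-- Parallel audited opening preserves simulation. -/
theorem sim_openA : ∀ {a b : Tm}, Sim a b → ∀ (j : ℕ) ⦃W W' : Tm⦄, Sim W W' →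
    Sim (openA j W a) (openA j W' b) := by
  intro a0 b0 h0
  refine @Sim.rec
    (fun a b _ => ∀ (j : ℕ) ⦃W W' : Tm⦄, Sim W W' → Sim (openA j W a) (openA j W' b))
    (fun θ θ' _ => ∀ (j : ℕ) ⦃W W' : Tm⦄, Sim W W' → SimBr (openABr j W θ) (openABr j W' θ'))
    ?_ ?_ ?_ ?_ ?_ ?_ ?_ ?_ ?_ ?_ ?_ ?_ a0 b0 h0
  · intro i j W W' _; exact .bvar i
  · intro a j W W' _; exact .fvar a
  · intro i j W W' h
    simp only [openA]
    split
    · exact h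
    · exact .bavar i
  · intro u j W W' _; exact .favar u
  · intro s s' τ _ ih j W W' h; exact .lam τ (ih j h)
  · intro a a' b b' _ _ ih1 ih2 j W W' h; exact .app (ih1 j h) (ih2 j h)
  · intro s s' _ ih j W W' h; exact .bang (ih j h)
  · intro a a' b b' τ _ _ ih1 ih2 j W W' h; exact .lett τ (ih1 j h) (ih2 (j+1) h)
  · intro θ θ' _ ih j W W' h; exact .ti (ih j h)
  · intro K θ q hd _ ih j W W' h
    show Sim (openA j W K) (.ti (openABr j W' θ))
    refine Sim.sponge q (isSome_lookup_openABr hd) ?_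
    rw [fold_openA j W' θ hd]
    exact ih j h
  · intro j W W' _; exact .nil
  · intro t t' θ θ' ψ _ _ ih1 ih2 j W W' h; exact .cons ψ (ih1 j h) (ih2 j h)

/-- Parallel simple opening preserves simulation. -/
theorem sim_openS : ∀ {a b : Tm}, Sim a b → ∀ (j : ℕ) ⦃W W' : Tm⦄, Sim W W' →
    Sim (openS j W a) (openS j W' b) := by
  intro a0 b0 h0
  refine @Sim.rec
    (fun a b _ => ∀ (j : ℕ) ⦃W W' : Tm⦄, Sim W W' → Sim (openS j W a) (openS j W' b))
    (fun θ θ' _ => ∀ (j : ℕ) ⦃W W' : Tm⦄, Sim W W' → SimBr (openSBr j W θ) (openSBr j W' θ'))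
    ?_ ?_ ?_ ?_ ?_ ?_ ?_ ?_ ?_ ?_ ?_ ?_ a0 b0 h0
  · intro i j W W' h
    simp only [openS]
    split
    · exact h
    · exact .bvar i
  · intro a j W W' _; exact .fvar a
  · intro i j W W' _; exact .bavar i
  · intro u j W W' _; exact .favar u
  · intro s s' τ _ ih j W W' h; exact .lam τ (ih (j+1) h)
  · intro a a' b b' _ _ ih1 ih2 j W W' h; exact .app (ih1 j h) (ih2 j h)
  · intro s s' hs _ j W W' h
    show Sim (.bang s) (.bang s')
    exact .bang hs
  · intro a a' b b' τ _ _ ih1 ih2 j W W' h; exact .lett τ (ih1 j h) (ih2 j h)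
  · intro θ θ' _ ih j W W' h; exact .ti (ih j h)
  · intro K θ q hd _ ih j W W' h
    show Sim (openS j W K) (.ti (openSBr j W' θ))
    refine Sim.sponge q (isSome_lookup_openSBr hd) ?_
    rw [fold_openS j W' θ hd]
    exact ih j h
  · intro j W W' _; exact .nil
  · intro t t' θ θ' ψ _ _ ih1 ih2 j W W' h; exact .cons ψ (ih1 j h) (ih2 j h)

end LHS
namespace LHS

open Relation

/-! ### Reduction lifting through contexts -/

theorem rtg_appL {a a' b : Tm} (h : ReflTransGen Red a a') :
    ReflTransGen Red (.app a b) (.app a' b) :=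
  ReflTransGen.lift (fun x => Tm.app x b) (fun _ _ h => Red.appL b h) _ _ h

theorem rtg_lettL {τ : Ty} {a a' b : Tm} (h : ReflTransGen Red a a') :
    ReflTransGen Red (.lett τ a b) (.lett τ a' b) :=
  ReflTransGen.lift (fun x => Tm.lett τ x b) (fun _ _ h => Red.lettL τ b h) _ _ h

theorem tg_appL {a a' b : Tm} (h : TransGen Red a a') :
    TransGen Red (.app a b) (.app a' b) :=
  TransGen.lift (fun x => Tm.app x b) (fun _ _ h => Red.appL b h) _ _ h

theorem tg_appR {a b b' : Tm} (h : TransGen Red b b') :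
    TransGen Red (.app a b) (.app a b') :=
  TransGen.lift (fun x => Tm.app a x) (fun _ _ h => Red.appR a h) _ _ h

theorem tg_lam {τ : Ty} {a a' : Tm} (h : TransGen Red a a') :
    TransGen Red (.lam τ a) (.lam τ a') :=
  TransGen.lift (fun x => Tm.lam τ x) (fun _ _ h => Red.lam τ h) _ _ h

theorem tg_bang {a a' : Tm} (h : TransGen Red a a') :
    TransGen Red (.bang a) (.bang a') :=
  TransGen.lift (fun x => Tm.bang x) (fun _ _ h => Red.bang h) _ _ h

theorem tg_lettL {τ : Ty} {a a' b : Tm} (h : TransGen Red a a') :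
    TransGen Red (.lett τ a b) (.lett τ a' b) :=
  TransGen.lift (fun x => Tm.lett τ x b) (fun _ _ h => Red.lettL τ b h) _ _ h

theorem tg_lettR {τ : Ty} {a b b' : Tm} (h : TransGen Red b b') :
    TransGen Red (.lett τ a b) (.lett τ a b') :=
  TransGen.lift (fun x => Tm.lett τ a x) (fun _ _ h => Red.lettR τ a h) _ _ h

theorem tg_ti {θ θ' : Br} (h : TransGen RedBr θ θ') :
    TransGen Red (.ti θ) (.ti θ') :=
  TransGen.lift (fun x => Tm.ti x) (fun _ _ h => Red.ti h) _ _ h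

theorem tgBr_here {ψ : Lab} {θ : Br} {a a' : Tm} (h : TransGen Red a a') :
    TransGen RedBr (.cons ψ a θ) (.cons ψ a' θ) :=
  TransGen.lift (fun x => Br.cons ψ x θ) (fun _ _ h => RedBr.here ψ θ h) _ _ h

theorem tgBr_there {ψ : Lab} {a : Tm} {θ θ' : Br} (h : TransGen RedBr θ θ') :
    TransGen RedBr (.cons ψ a θ) (.cons ψ a θ') :=
  TransGen.lift (fun x => Br.cons ψ a x) (fun _ _ h => RedBr.there ψ a h) _ _ h

/-! ### Inversion of simulation up to reduction -/

theorem sim_inv_lam : ∀ {a b : Tm}, Sim a b → ∀ {τ : Ty} {s : Tm}, a = .lam τ s →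
    ∃ s', ReflTransGen Red b (.lam τ s') ∧ Sim s s' := by
  intro a0 b0 h0
  refine @Sim.rec
    (fun a b _ => ∀ {τ : Ty} {s : Tm}, a = .lam τ s →
      ∃ s', ReflTransGen Red b (.lam τ s') ∧ Sim s s')
    (fun _ _ _ => True)
    ?_ ?_ ?_ ?_ ?_ ?_ ?_ ?_ ?_ ?_ ?_ ?_ a0 b0 h0
  · intro i τ s heq; exact absurd heq (by simp)
  · intro a τ s heq; exact absurd heq (by simp)
  · intro i τ s heq; exact absurd heq (by simp)
  · intro u τ s heq; exact absurd heq (by simp)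
  · intro s0 s0' τ0 hsub _ τ s heq
    injection heq with h1 h2
    subst h1; subst h2
    exact ⟨s0', .refl, hsub⟩
  · intro _ _ _ _ _ _ _ _ τ s heq; exact absurd heq (by simp)
  · intro _ _ _ _ τ s heq; exact absurd heq (by simp)
  · intro _ _ _ _ _ _ _ _ _ τ s heq; exact absurd heq (by simp)
  · intro _ _ _ _ τ s heq; exact absurd heq (by simp)
  · intro K θ q _ _ ih τ s heq
    obtain ⟨s', hst, hss⟩ := ih heq
    exact ⟨s', ReflTransGen.head (Red.tinsp q θ) hst, hss⟩
  · trivial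
  · intro _ _ _ _ _ _ _ _ _; trivial

theorem sim_inv_bang : ∀ {a b : Tm}, Sim a b → ∀ {s : Tm}, a = .bang s →
    ∃ s', ReflTransGen Red b (.bang s') ∧ Sim s s' := by
  intro a0 b0 h0
  refine @Sim.rec
    (fun a b _ => ∀ {s : Tm}, a = .bang s →
      ∃ s', ReflTransGen Red b (.bang s') ∧ Sim s s')
    (fun _ _ _ => True)
    ?_ ?_ ?_ ?_ ?_ ?_ ?_ ?_ ?_ ?_ ?_ ?_ a0 b0 h0
  · intro i s heq; exact absurd heq (by simp)
  · intro a s heq; exact absurd heq (by simp)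
  · intro i s heq; exact absurd heq (by simp)
  · intro u s heq; exact absurd heq (by simp)
  · intro _ _ _ _ _ s heq; exact absurd heq (by simp)
  · intro _ _ _ _ _ _ _ _ s heq; exact absurd heq (by simp)
  · intro s0 s0' hsub _ s heq
    injection heq with h1
    subst h1
    exact ⟨s0', .refl, hsub⟩
  · intro _ _ _ _ _ _ _ _ _ s heq; exact absurd heq (by simp)
  · intro _ _ _ _ s heq; exact absurd heq (by simp)
  · intro K θ q _ _ ih s heq
    obtain ⟨s', hst, hss⟩ := ih heq
    exact ⟨s', ReflTransGen.head (Red.tinsp q θ) hst, hss⟩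
  · trivial
  · intro _ _ _ _ _ _ _ _ _; trivial

theorem sim_inv_app : ∀ {a b : Tm}, Sim a b → ∀ {s t : Tm}, a = .app s t →
    ∃ s' t', ReflTransGen Red b (.app s' t') ∧ Sim s s' ∧ Sim t t' := by
  intro a0 b0 h0
  refine @Sim.rec
    (fun a b _ => ∀ {s t : Tm}, a = .app s t →
      ∃ s' t', ReflTransGen Red b (.app s' t') ∧ Sim s s' ∧ Sim t t')
    (fun _ _ _ => True)
    ?_ ?_ ?_ ?_ ?_ ?_ ?_ ?_ ?_ ?_ ?_ ?_ a0 b0 h0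
  · intro i s t heq; exact absurd heq (by simp)
  · intro a s t heq; exact absurd heq (by simp)
  · intro i s t heq; exact absurd heq (by simp)
  · intro u s t heq; exact absurd heq (by simp)
  · intro _ _ _ _ _ s t heq; exact absurd heq (by simp)
  · intro a a' b b' h1 h2 _ _ s t heq
    injection heq with e1 e2
    subst e1; subst e2
    exact ⟨a', b', .refl, h1, h2⟩
  · intro _ _ _ _ s t heq; exact absurd heq (by simp)
  · intro _ _ _ _ _ _ _ _ _ s t heq; exact absurd heq (by simp)
  · intro _ _ _ _ s t heq; exact absurd heq (by simp)
  · intro K θ q _ _ ih s t heq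
    obtain ⟨s', t', hst, hs, ht⟩ := ih heq
    exact ⟨s', t', ReflTransGen.head (Red.tinsp q θ) hst, hs, ht⟩
  · trivial
  · intro _ _ _ _ _ _ _ _ _; trivial

theorem sim_inv_lett : ∀ {a b : Tm}, Sim a b → ∀ {τ : Ty} {s t : Tm}, a = .lett τ s t →
    ∃ s' t', ReflTransGen Red b (.lett τ s' t') ∧ Sim s s' ∧ Sim t t' := by
  intro a0 b0 h0
  refine @Sim.rec
    (fun a b _ => ∀ {τ : Ty} {s t : Tm}, a = .lett τ s t →
      ∃ s' t', ReflTransGen Red b (.lett τ s' t') ∧ Sim s s' ∧ Sim t t')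
    (fun _ _ _ => True)
    ?_ ?_ ?_ ?_ ?_ ?_ ?_ ?_ ?_ ?_ ?_ ?_ a0 b0 h0
  · intro i τ s t heq; exact absurd heq (by simp)
  · intro a τ s t heq; exact absurd heq (by simp)
  · intro i τ s t heq; exact absurd heq (by simp)
  · intro u τ s t heq; exact absurd heq (by simp)
  · intro _ _ _ _ _ τ s t heq; exact absurd heq (by simp)
  · intro _ _ _ _ _ _ _ _ τ s t heq; exact absurd heq (by simp)
  · intro _ _ _ _ τ s t heq; exact absurd heq (by simp)
  · intro a a' b b' τ0 h1 h2 _ _ τ s t heq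
    injection heq with e0 e1 e2
    subst e0; subst e1; subst e2
    exact ⟨a', b', .refl, h1, h2⟩
  · intro _ _ _ _ τ s t heq; exact absurd heq (by simp)
  · intro K θ q _ _ ih τ s t heq
    obtain ⟨s', t', hst, hs, ht⟩ := ih heq
    exact ⟨s', t', ReflTransGen.head (Red.tinsp q θ) hst, hs, ht⟩
  · trivial
  · intro _ _ _ _ _ _ _ _ _; trivial

theorem sim_inv_ti : ∀ {a b : Tm}, Sim a b → ∀ {θK : Br}, a = .ti θK →
    ∃ θ', ReflTransGen Red b (.ti θ') ∧ SimBr θK θ' := by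
  intro a0 b0 h0
  refine @Sim.rec
    (fun a b _ => ∀ {θK : Br}, a = .ti θK →
      ∃ θ', ReflTransGen Red b (.ti θ') ∧ SimBr θK θ')
    (fun _ _ _ => True)
    ?_ ?_ ?_ ?_ ?_ ?_ ?_ ?_ ?_ ?_ ?_ ?_ a0 b0 h0
  · intro i θK heq; exact absurd heq (by simp)
  · intro a θK heq; exact absurd heq (by simp)
  · intro i θK heq; exact absurd heq (by simp)
  · intro u θK heq; exact absurd heq (by simp)
  · intro _ _ _ _ _ θK heq; exact absurd heq (by simp)
  · intro _ _ _ _ _ _ _ _ θK heq; exact absurd heq (by simp)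
  · intro _ _ _ _ θK heq; exact absurd heq (by simp)
  · intro _ _ _ _ _ _ _ _ _ θK heq; exact absurd heq (by simp)
  · intro θ θ' h _ θK heq
    injection heq with e
    subst e
    exact ⟨θ', .refl, h⟩
  · intro K θ q _ _ ih θK heq
    obtain ⟨θ', hst, hs⟩ := ih heq
    exact ⟨θ', ReflTransGen.head (Red.tinsp q θ) hst, hs⟩
  · trivial
  · intro _ _ _ _ _ _ _ _ _; trivial

end LHS
namespace LHS

open Relation

theorem simBr_lookup : ∀ {θ θ' : Br}, SimBr θ θ' → ∀ ψ : Lab,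
    (θ.lookup ψ = none ∧ θ'.lookup ψ = none) ∨
    ∃ t t', θ.lookup ψ = some t ∧ θ'.lookup ψ = some t' ∧ Sim t t'
| .nil, .nil, _, ψ => Or.inl ⟨rfl, rfl⟩
| .cons ψ0 t θ, _, h, ψ => by
    cases h with
    | cons ψ1 ht hθ =>
      by_cases hψ : ψ0 = ψ
      · subst hψ
        exact Or.inr ⟨_, _, by simp [Br.lookup], by simp [Br.lookup], ht⟩
      · rcases simBr_lookup hθ ψ with ⟨h1, h2⟩ | ⟨a, b, h1, h2, hab⟩
        · exact Or.inl ⟨by simp [Br.lookup, hψ, h1], by simp [Br.lookup, hψ, h2]⟩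
        · exact Or.inr ⟨a, b, by simp [Br.lookup, hψ, h1], by simp [Br.lookup, hψ, h2], hab⟩

theorem simBr_sel {θ θ' : Br} (h : SimBr θ θ') (ψ : Lab) : Sim (θ.sel ψ) (θ'.sel ψ) := by
  unfold Br.sel
  rcases simBr_lookup h ψ with ⟨h1, h2⟩ | ⟨a, b, h1, h2, hab⟩
  · rw [h1, h2]
    rcases simBr_lookup h Lab.dflt with ⟨g1, g2⟩ | ⟨c, d, g1, g2, hcd⟩
    · rw [g1, g2]; exact sim_refl _
    · rw [g1, g2]; exact hcd
  · rw [h1, h2]; exact hab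

mutual
theorem sim_fold {θ θ' : Br} (h : SimBr θ θ') : ∀ q : Tr, Sim (fold θ q) (fold θ' q)
| .rfl _ => simBr_sel h _
| .trn q q' => .app (.app (simBr_sel h _) (sim_fold h q)) (sim_fold h q')
| .bet _ _ _ => simBr_sel h _
| .betb _ _ _ => simBr_sel h _
| .ti _ _ => simBr_sel h _
| .lam _ q => .app (simBr_sel h _) (sim_fold h q)
| .app q q' => .app (.app (simBr_sel h _) (sim_fold h q)) (sim_fold h q')
| .lett q _ q' => .app (.app (simBr_sel h _) (sim_fold h q)) (sim_fold h q')
| .trpl ζ => simBr_foldBr h ζ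
theorem simBr_foldBr {θ θ' : Br} (h : SimBr θ θ') : ∀ ζ : TrBr, Sim (foldBr θ ζ) (foldBr θ' ζ)
| .nil => simBr_sel h _
| .cons _ q ζ => .app (.app (simBr_sel h _) (sim_fold h q)) (simBr_foldBr h ζ)
end

/-! ### The simulation theorem -/

theorem sim_step : ∀ {K K' : Tm}, Red K K' → ∀ {M : Tm}, Sim K M →
    ∃ M', TransGen Red M M' ∧ Sim K' M' := by
  intro K0 K0' h0
  refine @Red.rec
    (fun K K' _ => ∀ {M : Tm}, Sim K M → ∃ M', TransGen Red M M' ∧ Sim K' M')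
    (fun θ θ' _ => ∀ {θM : Br}, SimBr θ θM → ∃ θM', TransGen RedBr θM θM' ∧ SimBr θ' θM')
    ?_ ?_ ?_ ?_ ?_ ?_ ?_ ?_ ?_ ?_ ?_ ?_ K0 K0' h0
  -- beta
  · intro τ s t M hM
    obtain ⟨P, Mt, hst1, hP, hMt⟩ := sim_inv_app hM rfl
    obtain ⟨s', hst2, hs⟩ := sim_inv_lam hP rfl
    refine ⟨openS 0 Mt s', ?_, ?_⟩
    · exact TransGen.tail' (hst1.trans (rtg_appL hst2)) (Red.beta τ s' Mt)
    · exact sim_openS hs 0 hMt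
  -- betaBox
  · intro τ s t M hM
    obtain ⟨P, MK, hst1, hP, hMK⟩ := sim_inv_lett hM rfl
    obtain ⟨s', hst2, hs⟩ := sim_inv_bang hP rfl
    refine ⟨openA 0 s' MK, ?_, ?_⟩
    · exact TransGen.tail' (hst1.trans (rtg_lettL hst2)) (Red.betaBox τ s' MK)
    · exact sim_openA hMK 0 hs
  -- tinsp
  · intro q θ M hM
    obtain ⟨θM, hst, hbr⟩ := sim_inv_ti hM rfl
    exact ⟨fold θM q, TransGen.tail' hst (Red.tinsp q θM), sim_fold hbr q⟩
  -- lam congruence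
  · intro s t τ _ ih M hM
    obtain ⟨s', hst, hs⟩ := sim_inv_lam hM rfl
    obtain ⟨M1, hM1, hsim⟩ := ih hs
    exact ⟨.lam τ M1, TransGen.trans_right hst (tg_lam hM1), .lam τ hsim⟩
  -- appL
  · intro s t r _ ih M hM
    obtain ⟨s', r', hst, hs, hr⟩ := sim_inv_app hM rfl
    obtain ⟨M1, hM1, hsim⟩ := ih hs
    exact ⟨.app M1 r', TransGen.trans_right hst (tg_appL hM1), .app hsim hr⟩
  -- appR
  · intro s t r _ ih M hM
    obtain ⟨r', s', hst, hr, hs⟩ := sim_inv_app hM rfl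
    obtain ⟨M1, hM1, hsim⟩ := ih hs
    exact ⟨.app r' M1, TransGen.trans_right hst (tg_appR hM1), .app hr hsim⟩
  -- bang congruence
  · intro s t _ ih M hM
    obtain ⟨s', hst, hs⟩ := sim_inv_bang hM rfl
    obtain ⟨M1, hM1, hsim⟩ := ih hs
    exact ⟨.bang M1, TransGen.trans_right hst (tg_bang hM1), .bang hsim⟩
  -- lettL
  · intro s t τ r _ ih M hM
    obtain ⟨s', r', hst, hs, hr⟩ := sim_inv_lett hM rfl
    obtain ⟨M1, hM1, hsim⟩ := ih hs
    exact ⟨.lett τ M1 r', TransGen.trans_right hst (tg_lettL hM1), .lett τ hsim hr⟩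
  -- lettR
  · intro s t τ r _ ih M hM
    obtain ⟨r', s', hst, hr, hs⟩ := sim_inv_lett hM rfl
    obtain ⟨M1, hM1, hsim⟩ := ih hs
    exact ⟨.lett τ r' M1, TransGen.trans_right hst (tg_lettR hM1), .lett τ hr hsim⟩
  -- ti congruence
  · intro θ θ' _ ih M hM
    obtain ⟨θM, hst, hbr⟩ := sim_inv_ti hM rfl
    obtain ⟨θM', hθM, hsim⟩ := ih hbr
    exact ⟨.ti θM', TransGen.trans_right hst (tg_ti hθM), .ti hsim⟩
  -- RedBr.here
  · intro s t ψ θ _ ih θM hM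
    cases hM with
    | cons ψ1 hs hθ =>
      obtain ⟨M1, hM1, hsim⟩ := ih hs
      exact ⟨.cons ψ M1 _, tgBr_here hM1, .cons ψ hsim hθ⟩
  -- RedBr.there
  · intro θ θ' ψ s _ ih θM hM
    cases hM with
    | cons ψ1 hs hθ =>
      obtain ⟨θM1, hθM1, hsim⟩ := ih hθ
      exact ⟨.cons ψ _ θM1, tgBr_there hθM1, .cons ψ hs hsim⟩

/-- Strong normalization transfers along simulation. -/
theorem sim_sna : ∀ {M : Tm}, SNa M → ∀ {K : Tm}, Sim K M → SNa K := by
  intro M hM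
  have hM' : Acc (fun a b => TransGen Red b a) M := by
    have := Acc.transGen hM
    refine Subrelation.accessible ?_ this
    intro x y h
    exact (Relation.transGen_swap).mpr h
  clear hM
  induction hM' with
  | intro M hM ih =>
    intro K hK
    refine Acc.intro _ (fun K' hstep => ?_)
    obtain ⟨M', hMM', hsim⟩ := sim_step hstep hK
    exact ih M' hMM' hsim

end LHS
namespace LHS

/-! ### Sponge terms -/

/-- The sponge: a hard, strongly normalizing term which simulates any dangling
audited index in the range `[k, k+f]`. -/
def SP : ℕ → ℕ → Tm
| 0, k => .ti (.cons .rfl (.bavar k) (.cons .dflt (.fvar 0) .nil))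
| (f+1), k => .ti (.cons .rfl (.bavar k) (.cons .bet (SP f (k+1)) (.cons .dflt (.fvar 0) .nil)))

theorem SP_hard : ∀ (f k : ℕ), Hard (SP f k)
| 0, k => .ti (.cons _ (.bavar k) (.cons _ (.fvar 0) .nil))
| (f+1), k => .ti (.cons _ (.bavar k) (.cons _ (SP_hard f (k+1)) (.cons _ (.fvar 0) .nil)))

theorem SP_sna : ∀ (f k : ℕ), SNa (SP f k)
| 0, k => ti_acc (.cons _ (.bavar k) (.cons _ (.fvar 0) .nil))
    ⟨sna_bavar k, ⟨sna_fvar 0, trivial⟩⟩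
| (f+1), k => ti_acc (.cons _ (.bavar k) (.cons _ (SP_hard f (k+1)) (.cons _ (.fvar 0) .nil)))
    ⟨sna_bavar k, ⟨SP_sna f (k+1), ⟨sna_fvar 0, trivial⟩⟩⟩

theorem SP_mem_cr {C : Set Tm} (hC : CR C) (f k : ℕ) : SP f k ∈ C :=
  hard_mem_cr hC (SP_sna f k) (SP_hard f k)

theorem sim_bavar_SP : ∀ (f k j : ℕ), k ≤ j → j ≤ k + f → Sim (.bavar j) (SP f k)
| 0, k, j, h1, h2 => by
    have hkj : j = k := le_antisymm (by simpa using h2) h1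
    refine Sim.sponge (.rfl (.bvar 0)) (by simp [SP, Br.lookup]) ?_
    show Sim (.bavar j) (Br.sel _ Lab.rfl)
    simp only [Br.sel, Br.lookup, if_pos rfl]
    rw [hkj]
    exact .bavar k
| (f+1), k, j, h1, h2 => by
    rcases Nat.eq_or_lt_of_le h1 with heq | hlt
    · refine Sim.sponge (.rfl (.bvar 0)) (by simp [SP, Br.lookup]) ?_
      show Sim (.bavar j) (Br.sel _ Lab.rfl)
      simp only [Br.sel, Br.lookup, if_pos rfl]
      rw [← heq]
      exact .bavar k
    · refine Sim.sponge (.bet (.base 0) (.bvar 0) (.bvar 0)) (by simp [SP, Br.lookup]) ?_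
      show Sim (.bavar j) (Br.sel _ Lab.bet)
      have : (Br.cons Lab.rfl (Tm.bavar k) (Br.cons Lab.bet (SP f (k+1))
          (Br.cons Lab.dflt (Tm.fvar 0) Br.nil))).sel Lab.bet = SP f (k+1) := by
        simp [Br.sel, Br.lookup]
      rw [this]
      exact sim_bavar_SP f (k+1) j hlt (by omega)

/-! ### Size and the closing simulation -/

mutual
def sz : Tm → ℕ
| .bvar _ => 1
| .fvar _ => 1
| .bavar _ => 1
| .favar _ => 1
| .lam _ s => 1 + sz s
| .app a b => 1 + sz a + sz b
| .bang s => 1 + sz s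
| .lett _ a b => 1 + sz a + sz b
| .ti θ => 1 + szBr θ
def szBr : Br → ℕ
| .nil => 1
| .cons _ t θ => 1 + sz t + szBr θ
end

mutual
theorem sim_close (u : ℕ) : ∀ (t : Tm) (k fuel : ℕ), k + sz t ≤ fuel →
    Sim (closeA k u t) (substA u (SP fuel 0) t)
| .bvar i, k, fuel, _ => .bvar i
| .fvar a, k, fuel, _ => .fvar a
| .bavar i, k, fuel, _ => .bavar i
| .favar v, k, fuel, h => by
    simp only [closeA, substA]
    split
    · exact sim_bavar_SP fuel 0 k (Nat.zero_le k) (by simp [sz] at h; omega)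
    · exact .favar v
| .lam τ s, k, fuel, h => .lam τ (sim_close u s k fuel (by simp [sz] at h ⊢; omega))
| .app a b, k, fuel, h =>
    .app (sim_close u a k fuel (by simp [sz] at h ⊢; omega))
      (sim_close u b k fuel (by simp [sz] at h ⊢; omega))
| .bang s, k, fuel, h => .bang (sim_close u s k fuel (by simp [sz] at h ⊢; omega))
| .lett τ a b, k, fuel, h =>
    .lett τ (sim_close u a k fuel (by simp [sz] at h ⊢; omega))
      (sim_close u b (k+1) fuel (by simp [sz] at h ⊢; omega))
| .ti θ, k, fuel, h => .ti (simBr_close u θ k fuel (by simp [sz] at h ⊢; omega))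
theorem simBr_close (u : ℕ) : ∀ (θ : Br) (k fuel : ℕ), k + szBr θ ≤ fuel →
    SimBr (closeABr k u θ) (substABr u (SP fuel 0) θ)
| .nil, k, fuel, _ => .nil
| .cons ψ t θ, k, fuel, h =>
    .cons ψ (sim_close u t k fuel (by simp [szBr] at h ⊢; omega))
      (simBr_close u θ k fuel (by simp [szBr] at h ⊢; omega))
end

/-- The key lemma: closing is strongly normalizing provided all audited
substitution instances over a candidate are. -/
theorem close_sna {D : Set Tm} (hD : CR D) (u : ℕ) (t : Tm)
    (H : ∀ r ∈ D, SN (substA u r t)) : SNa (closeA 0 u t) :=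
  sim_sna (acc_of_sn (H _ (SP_mem_cr hD (sz t) 0)))
    (sim_close u t 0 (sz t) (by omega))

end LHS
namespace LHS

open Relation

theorem rtg_lettR {τ : Ty} {a b b' : Tm} (h : ReflTransGen Red b b') :
    ReflTransGen Red (.lett τ a b) (.lett τ a b') :=
  ReflTransGen.lift (fun x => Tm.lett τ a x) (fun _ _ h => Red.lettR τ a h) _ _ h

theorem mem_redSet_box {τ : Ty} {s : Tm} :
    s ∈ RedSet (.box τ) ↔ ∀ (u : ℕ) (C : Set Tm), CR C →
      ∀ t ∈ subCand C u (RedSet τ), Tm.lett τ s (closeA 0 u t) ∈ C := Iff.rfl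

theorem mem_redSet_arr {τ σ : Ty} {s : Tm} :
    s ∈ RedSet (.arr τ σ) ↔ ∀ t ∈ RedSet τ, Tm.app s t ∈ RedSet σ := Iff.rfl

theorem redSet_cr : ∀ τ : Ty, CR (RedSet τ) := by
  intro τ
  induction τ with
  | base n => exact cr_snset
  | arr τ σ ihτ ihσ =>
    refine ⟨?_, ?_, ?_⟩
    -- CR1
    · intro s hs
      have hfv : (Tm.fvar 0) ∈ RedSet τ := fvar_mem_cr ihτ 0
      exact sn_app_left (ihσ.1 (hs (Tm.fvar 0) hfv))
    -- CR2
    · intro s s' hs hred t ht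
      exact ihσ.2.1 _ _ (hs t ht) (Red.appL t hred)
    -- CR3
    · intro s hneu hred
      intro t ht
      have key : ∀ t : Tm, SNa t → t ∈ RedSet τ → Tm.app s t ∈ RedSet σ := by
        intro t hacc
        induction hacc with
        | intro t h iht =>
          intro ht
          refine ihσ.2.2 _ trivial ?_
          intro y hy
          cases hy with
          | beta τ2 s2 t2 => exact absurd hneu (by simp [Neutral])
          | appL r hr => exact hred _ hr t ht
          | appR r hr => exact iht _ hr (ihτ.2.1 _ _ ht hr)
      exact key t (acc_of_sn (ihτ.1 ht)) ht
  | box τ ihτ =>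
    have cr1 : ∀ s ∈ RedSet (.box τ), SN s := by
      intro s hs
      have h1 : (Tm.favar 0) ∈ subCand SNset 0 (RedSet τ) := by
        refine ⟨sn_of_acc (sna_favar 0), ?_⟩
        intro r hr
        have : substA 0 r (Tm.favar 0) = r := by simp [substA]
        rw [this]
        exact ihτ.1 hr
      exact sn_lett_left (hs 0 SNset cr_snset _ h1)
    have cr2 : ∀ s s', s ∈ RedSet (.box τ) → Red s s' → s' ∈ RedSet (.box τ) := by
      intro s s' hs hred u C hC t ht
      exact hC.2.1 _ _ (hs u C hC t ht) (Red.lettL τ _ hred)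
    refine ⟨cr1, cr2, ?_⟩
    intro s hneu hred u C hC t ht
    have hK : SNa (closeA 0 u t) :=
      close_sna ihτ u t (fun r hr => hC.1 (ht.2 r hr))
    have hsacc : SNa s :=
      Acc.intro s (fun s' h => acc_of_sn (cr1 s' (hred s' h)))
    have main : ∀ s' : Tm, SNa s' →
        (s' ∈ RedSet (.box τ) ∨ (Neutral s' ∧ ∀ y, Red s' y → y ∈ RedSet (.box τ))) →
        ∀ K : Tm, SNa K → ReflTransGen Red (closeA 0 u t) K → (Tm.lett τ s' K) ∈ C := by
      intro s' ha
      induction ha with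
      | intro s' ha ihs =>
        intro hgood K hKa
        induction hKa with
        | intro K hKacc ihK =>
          intro hreach
          refine hC.2.2 _ trivial ?_
          intro y hy
          cases hy with
          | betaBox τ2 s0 t2 =>
            have hbox : (Tm.bang s0) ∈ RedSet (.box τ) := by
              rcases hgood with h | ⟨hneu', _⟩
              · exact h
              · exact absurd hneu' (by simp [Neutral])
            have h0 : (Tm.lett τ (Tm.bang s0) (closeA 0 u t)) ∈ C := hbox u C hC t ht
            have h1 : ReflTransGen Red (Tm.lett τ (Tm.bang s0) (closeA 0 u t))
                (Tm.lett τ (Tm.bang s0) K) := rtg_lettR hreach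
            exact hC.2.1 _ _ (cr_mem_rtg hC h0 h1) (Red.betaBox τ s0 K)
          | lettL τ2 r hstep =>
            rename_i s''
            have hs'' : s'' ∈ RedSet (.box τ) := by
              rcases hgood with h | ⟨_, hr⟩
              · exact cr2 _ _ h hstep
              · exact hr _ hstep
            exact ihs _ hstep (Or.inl hs'') K (Acc.intro K hKacc) hreach
          | lettR τ2 r hstep =>
            rename_i K'
            exact ihK _ hstep (ReflTransGen.tail hreach hstep)
    exact main s hsacc (Or.inr ⟨hneu, hred⟩) _ hK .refl

end LHS

open LHS in
/-- For every λhs type τ, the reducible set Red(τ) is a reducibility candidate. -/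
theorem RedSet_CR (τ : Ty) : CR (RedSet τ) := by
  exact LHS.redSet_cr τ
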